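/- Let f be an accessible homeomorphism of a metric space M, and let A : M → GL(V) generate a cocycle equipped with stable and unstable holonomies H^A = (H^{A,s}, H^{A,u}). Suppose there exists a point x₀ ∈ M such that H^{A,P}_{x₀} = Id for every su-cycle P based at x₀. Then there exist B₀ ∈ GL(V) and a map C : M → GL(V) such that A(x) = C(fx) ∘ B₀ ∘ C(x)⁻¹ for all x ∈ M, and moreover H^{A,s}_{x,y} = C(y) ∘ C(x)⁻¹ for all y ∈ Wˢ(x) and H^{A,u}_{x,y} = C(y) ∘ C(x)⁻¹ for all y ∈ Wᵘ(x). -/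

import Mathlib

open Filter Topology

/-- The cocycle generated by `A : M → GL(V)` over `f`: `A⁰_x = Id` and
`Aⁿ_x = A(f^{n−1}x) ∘ ⋯ ∘ A(fx) ∘ A(x)`. -/
noncomputable def coc {M : Type*} {V : Type*} [NormedAddCommGroup V] [NormedSpace ℝ V]
    (f : M → M) (A : M → (V →L[ℝ] V)ˣ) : ℕ → M → (V →L[ℝ] V)ˣ
  | 0, _ => 1
  | n + 1, x => coc f A n (f x) * A x

/-- The stable set `Wˢ(x) = {y : dist(fⁿx, fⁿy) → 0}`. -/
def stableSet {M : Type*} [MetricSpace M] (f : M → M) (x : M) : Set M :=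
  {y | Tendsto (fun n : ℕ => dist (f^[n] x) (f^[n] y)) atTop (𝓝 0)}

/-- The unstable set `Wᵘ(x) = {y : dist(f⁻ⁿx, f⁻ⁿy) → 0}`. -/
def unstableSet {M : Type*} [MetricSpace M] (f : M ≃ₜ M) (x : M) : Set M :=
  {y | Tendsto (fun n : ℕ => dist ((⇑f.symm)^[n] x) ((⇑f.symm)^[n] y)) atTop (𝓝 0)}

/-- A stable holonomy for the cocycle generated by `A`: a family `H x y ∈ GL(V)`
(relevant for `y ∈ Wˢ(x)`) with `H x x = Id`, `H y z ∘ H x y = H x z`, and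
`H x y = (Aⁿ_y)⁻¹ ∘ H (fⁿx) (fⁿy) ∘ Aⁿ_x` for all `n`. -/
def IsStableHolonomy {M : Type*} [MetricSpace M] {V : Type*} [NormedAddCommGroup V]
    [NormedSpace ℝ V] (f : M → M) (A : M → (V →L[ℝ] V)ˣ)
    (H : M → M → (V →L[ℝ] V)ˣ) : Prop :=
  (∀ x, H x x = 1) ∧
  (∀ x y z, y ∈ stableSet f x → z ∈ stableSet f y → H y z * H x y = H x z) ∧
  (∀ x y, y ∈ stableSet f x → ∀ n : ℕ,
    H x y = (coc f A n y)⁻¹ * H (f^[n] x) (f^[n] y) * coc f A n x)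

/-- An unstable holonomy for the cocycle generated by `A`: a family `H x y ∈ GL(V)`
(relevant for `y ∈ Wᵘ(x)`) with `H x x = Id`, `H y z ∘ H x y = H x z`, and
`H x y = (A⁻ⁿ_y)⁻¹ ∘ H (f⁻ⁿx) (f⁻ⁿy) ∘ A⁻ⁿ_x` for all `n`, where
`A⁻ⁿ_x = (Aⁿ_{f⁻ⁿx})⁻¹`. -/
def IsUnstableHolonomy {M : Type*} [MetricSpace M] {V : Type*} [NormedAddCommGroup V]
    [NormedSpace ℝ V] (f : M ≃ₜ M) (A : M → (V →L[ℝ] V)ˣ)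
    (H : M → M → (V →L[ℝ] V)ˣ) : Prop :=
  (∀ x, H x x = 1) ∧
  (∀ x y z, y ∈ unstableSet f x → z ∈ unstableSet f y → H y z * H x y = H x z) ∧
  (∀ x y, y ∈ unstableSet f x → ∀ n : ℕ,
    H x y = coc (⇑f) A n ((⇑f.symm)^[n] y) * H ((⇑f.symm)^[n] x) ((⇑f.symm)^[n] y) *
      (coc (⇑f) A n ((⇑f.symm)^[n] x))⁻¹)

/-- An `su`-path starting at `x` is encoded by a list of labelled steps: step
`(true, y)` goes to `y ∈ Wˢ` of the current point, step `(false, y)` goes to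
`y ∈ Wᵘ` of the current point. `suChain f x p` says the list `p` is a valid
`su`-path starting at `x`. -/
def suChain {M : Type*} [MetricSpace M] (f : M ≃ₜ M) : M → List (Bool × M) → Prop
  | _, [] => True
  | x, (b, y) :: p => (if b then y ∈ stableSet (⇑f) x else y ∈ unstableSet f x) ∧ suChain f y p

/-- The endpoint of an `su`-path starting at `x` encoded by the list `p`. -/
def chainEnd {M : Type*} : M → List (Bool × M) → M
  | x, [] => x
  | _, (_, y) :: p => chainEnd y p

/-- The weight `H^P = H_{x_{k−1},x_k} ∘ ⋯ ∘ H_{x₀,x₁}` of an `su`-path with respect to a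
pair `(Hs, Hu)` of a stable and an unstable holonomy. -/
noncomputable def chainWeight {M : Type*} {V : Type*} [NormedAddCommGroup V]
    [NormedSpace ℝ V] (Hs Hu : M → M → (V →L[ℝ] V)ˣ) :
    M → List (Bool × M) → (V →L[ℝ] V)ˣ
  | _, [] => 1
  | x, (b, y) :: p => chainWeight Hs Hu y p * (if b then Hs x y else Hu x y)

section Aux

variable {V : Type*} [NormedAddCommGroup V] [NormedSpace ℝ V]
variable {M : Type*} [MetricSpace M]

lemma stable_symm (f : M ≃ₜ M) {x y : M} (h : y ∈ stableSet (⇑f) x) :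
    x ∈ stableSet (⇑f) y := by
  simpa [stableSet, dist_comm] using h

lemma unstable_symm (f : M ≃ₜ M) {x y : M} (h : y ∈ unstableSet f x) :
    x ∈ unstableSet f y := by
  simpa [unstableSet, dist_comm] using h

lemma stable_map (f : M ≃ₜ M) {x y : M} (h : y ∈ stableSet (⇑f) x) :
    f y ∈ stableSet (⇑f) (f x) := by
  have h' : Tendsto (fun n : ℕ => dist ((⇑f)^[n + 1] x) ((⇑f)^[n + 1] y)) atTop (𝓝 0) :=
    (tendsto_add_atTop_iff_nat 1).mpr h
  simpa [stableSet, Function.iterate_succ_apply] using h'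

lemma unstable_map (f : M ≃ₜ M) {x y : M} (h : y ∈ unstableSet f x) :
    f y ∈ unstableSet f (f x) := by
  have h' : Tendsto (fun n : ℕ =>
      dist ((⇑f.symm)^[n + 1] (f x)) ((⇑f.symm)^[n + 1] (f y))) atTop (𝓝 0) := by
    simpa [unstableSet, Function.iterate_succ_apply, Homeomorph.symm_apply_apply] using h
  exact (tendsto_add_atTop_iff_nat 1).mp h'

lemma hs_inv (f : M ≃ₜ M) (A : M → (V →L[ℝ] V)ˣ) (HAs : M → M → (V →L[ℝ] V)ˣ)
    (hHAs : IsStableHolonomy (⇑f) A HAs) {x y : M} (h : y ∈ stableSet (⇑f) x) :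
    HAs y x = (HAs x y)⁻¹ := by
  have h1 := hHAs.2.1 x y x h (stable_symm f h)
  rw [hHAs.1 x] at h1
  exact eq_inv_of_mul_eq_one_left h1

lemma hu_inv (f : M ≃ₜ M) (A : M → (V →L[ℝ] V)ˣ) (HAu : M → M → (V →L[ℝ] V)ˣ)
    (hHAu : IsUnstableHolonomy f A HAu) {x y : M} (h : y ∈ unstableSet f x) :
    HAu y x = (HAu x y)⁻¹ := by
  have h1 := hHAu.2.1 x y x h (unstable_symm f h)
  rw [hHAu.1 x] at h1
  exact eq_inv_of_mul_eq_one_left h1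

lemma hs_step (f : M ≃ₜ M) (A : M → (V →L[ℝ] V)ˣ) (HAs : M → M → (V →L[ℝ] V)ˣ)
    (hHAs : IsStableHolonomy (⇑f) A HAs) {x y : M} (h : y ∈ stableSet (⇑f) x) :
    HAs (f x) (f y) = A y * HAs x y * (A x)⁻¹ := by
  have h1 := hHAs.2.2 x y h 1
  have hc : ∀ z : M, coc (⇑f) A 1 z = A z := by intro z; simp [coc]
  rw [hc, hc] at h1
  simp only [Function.iterate_one] at h1
  rw [h1]; group

lemma hu_step (f : M ≃ₜ M) (A : M → (V →L[ℝ] V)ˣ) (HAu : M → M → (V →L[ℝ] V)ˣ)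
    (hHAu : IsUnstableHolonomy f A HAu) {x y : M} (h : y ∈ unstableSet f x) :
    HAu (f x) (f y) = A y * HAu x y * (A x)⁻¹ := by
  have h1 := hHAu.2.2 (f x) (f y) (unstable_map f h) 1
  have hc : ∀ z : M, coc (⇑f) A 1 z = A z := by intro z; simp [coc]
  rw [hc, hc] at h1
  simp only [Function.iterate_one, Homeomorph.symm_apply_apply] at h1
  exact h1

lemma chainEnd_append (x : M) (p q : List (Bool × M)) :
    chainEnd x (p ++ q) = chainEnd (chainEnd x p) q := by
  induction p generalizing x with
  | nil => rfl
  | cons a p ih => obtain ⟨b, y⟩ := a; simp only [List.cons_append, List.append_eq, chainEnd, ih]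

lemma suChain_append (f : M ≃ₜ M) {x : M} {p q : List (Bool × M)} (hp : suChain f x p)
    (hq : suChain f (chainEnd x p) q) : suChain f x (p ++ q) := by
  induction p generalizing x with
  | nil => exact hq
  | cons a p ih =>
    obtain ⟨b, y⟩ := a
    exact ⟨hp.1, ih hp.2 hq⟩

lemma chainWeight_append (Hs Hu : M → M → (V →L[ℝ] V)ˣ) (x : M) (p q : List (Bool × M)) :
    chainWeight Hs Hu x (p ++ q) =
      chainWeight Hs Hu (chainEnd x p) q * chainWeight Hs Hu x p := by
  induction p generalizing x with
  | nil => simp [chainWeight, chainEnd]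
  | cons a p ih =>
    obtain ⟨b, y⟩ := a
    simp only [List.cons_append, List.append_eq, chainWeight, chainEnd, ih, mul_assoc]

def revChain {M : Type*} : M → List (Bool × M) → List (Bool × M)
  | _, [] => []
  | x, (b, y) :: p => revChain y p ++ [(b, x)]

lemma revChain_end (x : M) (p : List (Bool × M)) :
    chainEnd (chainEnd x p) (revChain x p) = x := by
  induction p generalizing x with
  | nil => rfl
  | cons a p ih =>
    obtain ⟨b, y⟩ := a
    show chainEnd (chainEnd y p) (revChain y p ++ [(b, x)]) = x
    rw [chainEnd_append, ih]
    rfl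

lemma revChain_suChain (f : M ≃ₜ M) {x : M} {p : List (Bool × M)} (hp : suChain f x p) :
    suChain f (chainEnd x p) (revChain x p) := by
  induction p generalizing x with
  | nil => trivial
  | cons a p ih =>
    obtain ⟨b, y⟩ := a
    show suChain f (chainEnd y p) (revChain y p ++ [(b, x)])
    apply suChain_append f (ih hp.2)
    rw [revChain_end]
    refine ⟨?_, trivial⟩
    have h1 := hp.1
    cases b with
    | true => simpa using stable_symm f (by simpa using h1)
    | false => simpa using unstable_symm f (by simpa using h1)

lemma revChain_weight (f : M ≃ₜ M) (A : M → (V →L[ℝ] V)ˣ)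
    (HAs HAu : M → M → (V →L[ℝ] V)ˣ)
    (hHAs : IsStableHolonomy (⇑f) A HAs) (hHAu : IsUnstableHolonomy f A HAu)
    {x : M} {p : List (Bool × M)} (hp : suChain f x p) :
    chainWeight HAs HAu (chainEnd x p) (revChain x p) = (chainWeight HAs HAu x p)⁻¹ := by
  induction p generalizing x with
  | nil => simp [chainWeight, revChain]
  | cons a p ih =>
    obtain ⟨b, y⟩ := a
    show chainWeight HAs HAu (chainEnd y p) (revChain y p ++ [(b, x)]) = _
    rw [chainWeight_append, revChain_end, ih hp.2]
    have h1 := hp.1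
    have hsingle : chainWeight HAs HAu y [(b, x)] = (if b then HAs x y else HAu x y)⁻¹ := by
      cases b with
      | true =>
        simp only [chainWeight, if_true, one_mul]
        exact hs_inv f A HAs hHAs (by simpa using h1)
      | false =>
        simp only [chainWeight, if_false, one_mul]
        exact hu_inv f A HAu hHAu (by simpa using h1)
    rw [hsingle]
    show _ = (chainWeight HAs HAu y p * _)⁻¹
    rw [mul_inv_rev]

end Aux
/-- Corollary 4.10: if a cocycle `A` over an accessible `f` has holonomies
`H^A = (H^{A,s}, H^{A,u})` all of whose `su`-cycle weights at some point `x₀` are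
trivial, then `A` is continuously cohomologous to a constant cocycle `B₀` via a
conjugacy `C` that intertwines `H^A` with the trivial holonomies of `B₀`, i.e.
`H^A_{x,y} = C(y) ∘ C(x)⁻¹`. -/
theorem stmt_13 {V : Type*} [NormedAddCommGroup V] [NormedSpace ℝ V] [CompleteSpace V]
    {M : Type*} [MetricSpace M] (f : M ≃ₜ M) (A : M → (V →L[ℝ] V)ˣ)
    (HAs HAu : M → M → (V →L[ℝ] V)ˣ)
    (hHAs : IsStableHolonomy (⇑f) A HAs) (hHAu : IsUnstableHolonomy f A HAu)
    (hacc : ∀ x y : M, ∃ p : List (Bool × M), suChain f x p ∧ chainEnd x p = y)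
    (x₀ : M)
    (hcyc : ∀ p : List (Bool × M), suChain f x₀ p → chainEnd x₀ p = x₀ →
      chainWeight HAs HAu x₀ p = 1) :
    ∃ (B₀ : (V →L[ℝ] V)ˣ) (C : M → (V →L[ℝ] V)ˣ),
      (∀ x : M, A x = C (f x) * B₀ * (C x)⁻¹) ∧
      (∀ x y : M, y ∈ stableSet (⇑f) x → HAs x y = C y * (C x)⁻¹) ∧
      (∀ x y : M, y ∈ unstableSet f x → HAu x y = C y * (C x)⁻¹) := by
  classical
  choose P hP hPend using fun x => hacc x₀ x
  set C : M → (V →L[ℝ] V)ˣ := fun x => chainWeight HAs HAu x₀ (P x) with hC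
  -- path independence
  have indep : ∀ p q : List (Bool × M), suChain f x₀ p → suChain f x₀ q →
      chainEnd x₀ p = chainEnd x₀ q →
      chainWeight HAs HAu x₀ p = chainWeight HAs HAu x₀ q := by
    intro p q hp hq he
    have h1 : suChain f x₀ (p ++ revChain x₀ q) := by
      apply suChain_append f hp
      rw [he]
      exact revChain_suChain f hq
    have h2 : chainEnd x₀ (p ++ revChain x₀ q) = x₀ := by
      rw [chainEnd_append, he, revChain_end]
    have h3 := hcyc _ h1 h2
    rw [chainWeight_append, he, revChain_weight f A HAs HAu hHAs hHAu hq] at h3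
    exact (inv_mul_eq_one.mp h3).symm
  -- behaviour of C along stable/unstable steps
  have Cs : ∀ x y : M, y ∈ stableSet (⇑f) x → C y = HAs x y * C x := by
    intro x y hxy
    have hp' : suChain f x₀ (P x ++ [(true, y)]) := by
      apply suChain_append f (hP x)
      rw [hPend x]
      exact ⟨by simpa using hxy, trivial⟩
    have he' : chainEnd x₀ (P x ++ [(true, y)]) = y := by
      rw [chainEnd_append, hPend x]; rfl
    have := indep (P y) (P x ++ [(true, y)]) (hP y) hp' (by rw [hPend y, he'])
    rw [chainWeight_append, hPend x] at this
    simpa [hC, chainWeight] using this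
  have Cu : ∀ x y : M, y ∈ unstableSet f x → C y = HAu x y * C x := by
    intro x y hxy
    have hp' : suChain f x₀ (P x ++ [(false, y)]) := by
      apply suChain_append f (hP x)
      rw [hPend x]
      exact ⟨by simpa using hxy, trivial⟩
    have he' : chainEnd x₀ (P x ++ [(false, y)]) = y := by
      rw [chainEnd_append, hPend x]; rfl
    have := indep (P y) (P x ++ [(false, y)]) (hP y) hp' (by rw [hPend y, he'])
    rw [chainWeight_append, hPend x] at this
    simpa [hC, chainWeight] using this
  -- the candidate constant cocycle
  set D : M → (V →L[ℝ] V)ˣ := fun x => (C (f x))⁻¹ * A x * C x with hD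
  have Ds : ∀ x y : M, y ∈ stableSet (⇑f) x → D y = D x := by
    intro x y hxy
    have h1 := Cs x y hxy
    have h2 := Cs (f x) (f y) (stable_map f hxy)
    have h3 := hs_step f A HAs hHAs hxy
    rw [hD]
    simp only
    rw [h1, h2, h3]
    group
  have Du : ∀ x y : M, y ∈ unstableSet f x → D y = D x := by
    intro x y hxy
    have h1 := Cu x y hxy
    have h2 := Cu (f x) (f y) (unstable_map f hxy)
    have h3 := hu_step f A HAu hHAu hxy
    rw [hD]
    simp only
    rw [h1, h2, h3]
    group
  have Dchain : ∀ (p : List (Bool × M)) (x : M), suChain f x p → D (chainEnd x p) = D x := by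
    intro p
    induction p with
    | nil => intro x _; rfl
    | cons a p ih =>
      obtain ⟨b, y⟩ := a
      intro x hp
      have : D (chainEnd y p) = D y := ih y hp.2
      rw [show chainEnd x ((b, y) :: p) = chainEnd y p from rfl, this]
      have h1 := hp.1
      cases b with
      | true => exact Ds x y (by simpa using h1)
      | false => exact Du x y (by simpa using h1)
  have Dconst : ∀ x : M, D x = D x₀ := by
    intro x
    obtain ⟨p, hp, hpe⟩ := hacc x₀ x
    rw [← hpe]
    exact Dchain p x₀ hp
  refine ⟨D x₀, C, ?_, ?_, ?_⟩
  · intro x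
    rw [← Dconst x]
    show A x = C (f x) * ((C (f x))⁻¹ * A x * C x) * (C x)⁻¹
    group
  · intro x y hxy
    rw [Cs x y hxy]
    group
  · intro x y hxy
    rw [Cu x y hxy]
    group
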